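/- Let T : X → Y be bounded injective between Hilbert spaces, Tx† = y†, and x_α = (T*T+αI)^{-1}(T*y† + αx₀) the Tikhonov regularized solution. Then for 0 ≤ ν ≤ 1, N_ν^{-1} ‖x†-x₀‖_{ν:1} ≤ sup_{α>0} α^{-ν} ‖x† - x_α‖ ≤ ‖x†-x₀‖_{ν:1}, where ‖z‖_{ν:1}² = sup_{t>0} t^{-2ν} ∫ t²/(t²+λ²) dμ_z(λ) with μ_z the spectral measure of T*T applied to z. -/

import Mathlib

open MeasureTheory Set

private lemma pt_ineq {ν σ t l : ℝ} (h0 : 0 ≤ ν) (h1 : ν ≤ 1) (hσ : 0 < σ)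
    (ht : 0 < t) (hl : 0 ≤ l) :
    σ ^ (1 - ν) / (1 + σ) * (t ^ (-(2 * ν)) * (t ^ 2 / (t ^ 2 + l ^ 2)))
      ≤ (Real.sqrt σ * t) ^ (-(2 * ν)) * ((Real.sqrt σ * t) / (Real.sqrt σ * t + l)) ^ 2 := by
  set s := Real.sqrt σ with hs_def
  have hs : 0 < s := Real.sqrt_pos.2 hσ
  have hs2 : s ^ 2 = σ := Real.sq_sqrt hσ.le
  have hkey : s ^ (-(2 * ν)) * s ^ 2 = σ ^ (1 - ν) := by
    rw [← hs2, ← Real.rpow_natCast s 2, ← Real.rpow_mul hs.le, ← Real.rpow_add hs]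
    congr 1
    push_cast
    ring
  have hstl : 0 < s * t + l := by positivity
  have htl : 0 < t ^ 2 + l ^ 2 := by positivity
  have h1σ : (0:ℝ) < 1 + σ := by linarith
  have core : (s * t + l) ^ 2 ≤ (1 + σ) * (t ^ 2 + l ^ 2) := by
    nlinarith [sq_nonneg (t - s * l), hs2]
  have hA : (0:ℝ) ≤ σ ^ (1 - ν) := Real.rpow_nonneg hσ.le _
  have h2 : σ ^ (1 - ν) / (1 + σ) * (t ^ 2 / (t ^ 2 + l ^ 2))
      ≤ σ ^ (1 - ν) * t ^ 2 / ((s * t + l) ^ 2) := by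
    rw [div_mul_div_comm, div_le_div_iff₀ (by positivity) (by positivity)]
    nlinarith [mul_le_mul_of_nonneg_left core (mul_nonneg hA (sq_nonneg t))]
  have hre : (s * t) ^ (-(2 * ν)) * ((s * t) / (s * t + l)) ^ 2
      = t ^ (-(2 * ν)) * (σ ^ (1 - ν) * t ^ 2 / ((s * t + l) ^ 2)) := by
    rw [Real.mul_rpow hs.le ht.le, div_pow, mul_pow, ← hkey]
    ring
  rw [hre]
  have hP : (0:ℝ) ≤ t ^ (-(2 * ν)) := Real.rpow_nonneg ht.le _
  calc σ ^ (1 - ν) / (1 + σ) * (t ^ (-(2 * ν)) * (t ^ 2 / (t ^ 2 + l ^ 2)))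
      = t ^ (-(2 * ν)) * (σ ^ (1 - ν) / (1 + σ) * (t ^ 2 / (t ^ 2 + l ^ 2))) := by ring
    _ ≤ _ := mul_le_mul_of_nonneg_left h2 hP

theorem stmt15 {X Y : Type*}
    [NormedAddCommGroup X] [InnerProductSpace ℝ X] [CompleteSpace X]
    [NormedAddCommGroup Y] [InnerProductSpace ℝ Y] [CompleteSpace Y]
    (T : X →L[ℝ] Y) (hT : Function.Injective T)
    (xdag x0 : X) (ydag : Y) (hy : T xdag = ydag)
    (xα : ℝ → X)
    (hxα : ∀ α : ℝ, 0 < α →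
      (ContinuousLinearMap.adjoint T) (T (xα α)) + α • (xα α)
        = (ContinuousLinearMap.adjoint T) ydag + α • x0)
    (μ : Measure ℝ) [IsFiniteMeasure μ] (hsupp : μ (Iio 0) = 0)
    (hrep : ∀ α : ℝ, 0 < α →
      ENNReal.ofReal (‖xdag - xα α‖ ^ 2) = ∫⁻ l, ENNReal.ofReal ((α/(α+l)) ^ 2) ∂μ)
    (ν : ℝ) (h0 : 0 ≤ ν) (h1 : ν ≤ 1) :
    ENNReal.ofReal (ν ^ ν * (1 - ν) ^ (1 - ν)) *
      (⨆ t ∈ Ioi (0:ℝ), ENNReal.ofReal (t ^ (-(2*ν))) *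
        ∫⁻ l, ENNReal.ofReal (t ^ 2 / (t ^ 2 + l ^ 2)) ∂μ)
      ≤ (⨆ α ∈ Ioi (0:ℝ), ENNReal.ofReal (α ^ (-(2*ν)) * ‖xdag - xα α‖ ^ 2)) ∧
    (⨆ α ∈ Ioi (0:ℝ), ENNReal.ofReal (α ^ (-(2*ν)) * ‖xdag - xα α‖ ^ 2))
      ≤ ⨆ t ∈ Ioi (0:ℝ), ENNReal.ofReal (t ^ (-(2*ν))) *
          ∫⁻ l, ENNReal.ofReal (t ^ 2 / (t ^ 2 + l ^ 2)) ∂μ := by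
  have hae : ∀ᵐ l ∂μ, 0 ≤ l := by
    rw [ae_iff]
    simp only [not_le]; exact hsupp
  have key : ∀ α : ℝ, 0 < α →
      ENNReal.ofReal (α ^ (-(2*ν)) * ‖xdag - xα α‖ ^ 2)
        = ENNReal.ofReal (α ^ (-(2*ν))) * ∫⁻ l, ENNReal.ofReal ((α/(α+l)) ^ 2) ∂μ := by
    intro α hα
    rw [ENNReal.ofReal_mul (Real.rpow_nonneg hα.le _), hrep α hα]
  constructor
  · -- lower bound
    have main : ∀ σ : ℝ, σ ∈ Ioi (0:ℝ) → ∀ t : ℝ, 0 < t →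
        ENNReal.ofReal (σ ^ (1-ν) / (1+σ)) *
          (ENNReal.ofReal (t ^ (-(2*ν))) * ∫⁻ l, ENNReal.ofReal (t ^ 2 / (t ^ 2 + l ^ 2)) ∂μ)
        ≤ ⨆ α ∈ Ioi (0:ℝ), ENNReal.ofReal (α ^ (-(2*ν)) * ‖xdag - xα α‖ ^ 2) := by
      intro σ hσ t ht
      have hσ : (0:ℝ) < σ := hσ
      set s := Real.sqrt σ with hs_def
      have hs : 0 < s := Real.sqrt_pos.2 hσ
      have hα : 0 < s * t := by positivity
      calc ENNReal.ofReal (σ ^ (1-ν) / (1+σ)) *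
            (ENNReal.ofReal (t ^ (-(2*ν))) * ∫⁻ l, ENNReal.ofReal (t ^ 2 / (t ^ 2 + l ^ 2)) ∂μ)
          = ∫⁻ l, ENNReal.ofReal (σ ^ (1-ν) / (1+σ) * (t ^ (-(2*ν)) * (t ^ 2 / (t ^ 2 + l ^ 2)))) ∂μ := by
            rw [← lintegral_const_mul' _ _ ENNReal.ofReal_ne_top,
                ← lintegral_const_mul' _ _ ENNReal.ofReal_ne_top]
            congr 1; funext l
            rw [ENNReal.ofReal_mul (by positivity),
              ENNReal.ofReal_mul (Real.rpow_nonneg ht.le _)]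
        _ ≤ ∫⁻ l, ENNReal.ofReal ((s*t) ^ (-(2*ν)) * ((s*t)/(s*t+l)) ^ 2) ∂μ := by
            refine lintegral_mono_ae (hae.mono fun l hl => ?_)
            exact ENNReal.ofReal_le_ofReal (pt_ineq h0 h1 hσ ht hl)
        _ = ENNReal.ofReal ((s*t) ^ (-(2*ν)) * ‖xdag - xα (s*t)‖ ^ 2) := by
            rw [key (s*t) hα, ← lintegral_const_mul' _ _ ENNReal.ofReal_ne_top]
            congr 1; funext l
            rw [← ENNReal.ofReal_mul (Real.rpow_nonneg hα.le _)]
        _ ≤ _ := le_iSup₂ (f := fun α (_ : α ∈ Ioi (0:ℝ)) =>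
              ENNReal.ofReal (α ^ (-(2*ν)) * ‖xdag - xα α‖ ^ 2)) (s*t) hα
    have hc : ENNReal.ofReal (ν ^ ν * (1 - ν) ^ (1 - ν))
        ≤ ⨆ σ ∈ Ioi (0:ℝ), ENNReal.ofReal (σ ^ (1-ν) / (1+σ)) := by
      rcases lt_or_eq_of_le h0 with h0' | h0'
      · rcases lt_or_eq_of_le h1 with h1' | h1'
        · -- 0 < ν < 1
          have h1ν : (0:ℝ) < 1 - ν := by linarith
          have hσ0 : (0:ℝ) < (1 - ν)/ν := div_pos h1ν h0'
          refine le_iSup₂_of_le ((1-ν)/ν) hσ0 (le_of_eq ?_)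
          congr 1
          have hν1 : ν ^ ν * ν ^ (1 - ν) = ν := by
            rw [← Real.rpow_add h0']; norm_num
          have hc0 : (0:ℝ) < ν ^ (1 - ν) := Real.rpow_pos_of_pos h0' _
          rw [Real.div_rpow h1ν.le h0'.le,
            show 1 + (1-ν)/ν = 1/ν by field_simp; ring]
          field_simp
          linear_combination hν1
        · -- ν = 1
          subst h1'
          simp only [sub_self, Real.rpow_zero, Real.one_rpow, one_mul, mul_one,
            Real.rpow_one]
          refine le_of_forall_lt fun w hw => ?_
          have hw1 : w ≠ ⊤ := ne_top_of_lt hw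
          set r := w.toReal with hr_def
          have hr0 : 0 ≤ r := ENNReal.toReal_nonneg
          have hr1 : r < 1 := by
            have hw' : w < ENNReal.ofReal 1 := by simpa using hw
            exact (ENNReal.lt_ofReal_iff_toReal_lt hw1).1 hw'
          have hσpos : (0:ℝ) < (1 - r)/(1 + r) := div_pos (by linarith) (by linarith)
          have hval : 1 / (1 + (1 - r)/(1 + r)) = (1 + r)/2 := by
            have h1r : (1:ℝ) + r ≠ 0 := by positivity
            field_simp
            norm_num
          refine lt_of_lt_of_le ?_ (le_iSup₂ (f := fun σ (_ : σ ∈ Ioi (0:ℝ)) =>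
            ENNReal.ofReal (1 / (1 + σ))) ((1-r)/(1+r)) hσpos)
          rw [hval, ← ENNReal.ofReal_toReal hw1, ← hr_def]
          exact (ENNReal.ofReal_lt_ofReal_iff (by linarith)).2 (by linarith)
      · -- ν = 0
        subst h0'
        simp only [Real.rpow_zero, sub_zero, Real.rpow_one, Real.one_rpow, one_mul, mul_one]
        refine le_of_forall_lt fun w hw => ?_
        have hw1 : w ≠ ⊤ := ne_top_of_lt hw
        set r := w.toReal with hr_def
        have hr0 : 0 ≤ r := ENNReal.toReal_nonneg
        have hr1 : r < 1 := by
          have hw' : w < ENNReal.ofReal 1 := by simpa using hw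
          exact (ENNReal.lt_ofReal_iff_toReal_lt hw1).1 hw'
        have hσpos : (0:ℝ) < (1 + r)/(1 - r) := div_pos (by linarith) (by linarith)
        have hval : ((1 + r)/(1 - r)) / (1 + (1 + r)/(1 - r)) = (1 + r)/2 := by
          have h1r : (1:ℝ) - r ≠ 0 := by linarith
          field_simp
          norm_num
        refine lt_of_lt_of_le ?_ (le_iSup₂ (f := fun σ (_ : σ ∈ Ioi (0:ℝ)) =>
          ENNReal.ofReal (σ / (1 + σ))) ((1+r)/(1-r)) hσpos)
        rw [hval, ← ENNReal.ofReal_toReal hw1, ← hr_def]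
        exact (ENNReal.ofReal_lt_ofReal_iff (by linarith)).2 (by linarith)
    simp_rw [ENNReal.mul_iSup]
    refine iSup₂_le fun t ht => ?_
    have ht : (0:ℝ) < t := ht
    calc ENNReal.ofReal (ν ^ ν * (1-ν) ^ (1-ν)) *
          (ENNReal.ofReal (t ^ (-(2*ν))) * ∫⁻ l, ENNReal.ofReal (t ^ 2 / (t ^ 2 + l ^ 2)) ∂μ)
        ≤ (⨆ σ ∈ Ioi (0:ℝ), ENNReal.ofReal (σ ^ (1-ν) / (1+σ))) *
          (ENNReal.ofReal (t ^ (-(2*ν))) * ∫⁻ l, ENNReal.ofReal (t ^ 2 / (t ^ 2 + l ^ 2)) ∂μ) :=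
          mul_le_mul_left hc _
      _ = ⨆ σ ∈ Ioi (0:ℝ), ENNReal.ofReal (σ ^ (1-ν) / (1+σ)) *
          (ENNReal.ofReal (t ^ (-(2*ν))) * ∫⁻ l, ENNReal.ofReal (t ^ 2 / (t ^ 2 + l ^ 2)) ∂μ) := by
          simp_rw [ENNReal.iSup_mul]
      _ ≤ _ := iSup₂_le fun σ hσ => main σ hσ t ht
  · -- upper bound
    refine iSup₂_le fun α hα => ?_
    have hα : (0:ℝ) < α := hα
    rw [key α hα]
    refine le_trans ?_ (le_iSup₂ (f := fun t (_ : t ∈ Ioi (0:ℝ)) =>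
      ENNReal.ofReal (t ^ (-(2*ν))) * ∫⁻ l, ENNReal.ofReal (t ^ 2 / (t ^ 2 + l ^ 2)) ∂μ) α hα)
    refine mul_le_mul_right ?_ _
    refine lintegral_mono_ae (hae.mono fun l hl => ENNReal.ofReal_le_ofReal ?_)
    have hαl : (0:ℝ) < α + l := by linarith
    have hαl2 : (0:ℝ) < α ^ 2 + l ^ 2 :=
      add_pos_of_pos_of_nonneg (pow_pos hα 2) (sq_nonneg l)
    rw [div_pow, div_le_div_iff₀ (pow_pos hαl 2) hαl2]
    nlinarith [mul_nonneg (mul_nonneg hα.le hα.le) (mul_nonneg hα.le hl)]
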